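/- arXiv:1705.10260 — 2 statements merged into one kernel-verified Lean document; each statement's English description precedes it below -/
import Mathlib

section
/- Let q be a prime power, n ≥ 1, and let E be a subset of 𝔽_q^n that is Kakeya with respect to hyperplanes, i.e., for every (n−1)-dimensional linear subspace w of 𝔽_q^n there exists a vector v ∈ 𝔽_q^n such that the affine translate v + w is contained in E. Then |E| ≥ (q^{2n} − q^n)/(q^n + q^2 − 2q). -/
open Module

section KakeyaAux

variable {F : Type*} [Field F] {n : ℕ}

/-- The linear functional `x ↦ ∑ i, a i * x i`. -/
def kakLin (a : Fin n → F) : (Fin n → F) →ₗ[F] F where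
  toFun x := ∑ i, a i * x i
  map_add' x y := by simp [mul_add, Finset.sum_add_distrib]
  map_smul' c x := by simp [Finset.mul_sum, mul_left_comm]

lemma kakLin_apply (a x : Fin n → F) : kakLin a x = ∑ i, a i * x i := rfl

lemma kakLin_single (a : Fin n → F) (i : Fin n) (c : F) :
    kakLin a (Pi.single i c) = a i * c := by
  rw [kakLin_apply, Finset.sum_eq_single i]
  · simp
  · intro j _ hj; simp [Pi.single_eq_of_ne hj]
  · intro h; exact absurd (Finset.mem_univ i) h

lemma kakLin_surj {a : Fin n → F} (ha : a ≠ 0) : Function.Surjective (kakLin a) := by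
  obtain ⟨i, hi⟩ := Function.ne_iff.mp ha
  have hi' : a i ≠ 0 := hi
  intro y
  refine ⟨Pi.single i ((a i)⁻¹ * y), ?_⟩
  rw [kakLin_single]
  field_simp

lemma finrank_ker_kakLin {a : Fin n → F} (ha : a ≠ 0) :
    finrank F (LinearMap.ker (kakLin a)) = n - 1 := by
  have h := LinearMap.finrank_range_add_finrank_ker (kakLin a)
  rw [LinearMap.range_eq_top.2 (kakLin_surj ha), finrank_top, finrank_self,
    Module.finrank_pi] at h
  simp only [Fintype.card_fin] at h
  omega

lemma kakLin_smul_of_ker_le {a b : Fin n → F} (hb : b ≠ 0)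
    (h : LinearMap.ker (kakLin b) ≤ LinearMap.ker (kakLin a)) : ∃ c : F, a = c • b := by
  obtain ⟨x₀, hx₀⟩ := kakLin_surj hb 1
  refine ⟨kakLin a x₀, ?_⟩
  have key : ∀ x, kakLin a x = kakLin a x₀ * kakLin b x := by
    intro x
    have hx : x - kakLin b x • x₀ ∈ LinearMap.ker (kakLin b) := by
      simp [LinearMap.mem_ker, map_sub, map_smul, hx₀]
    have h2 := h hx
    simp only [LinearMap.mem_ker, map_sub, map_smul, smul_eq_mul, sub_eq_zero] at h2
    rw [h2]; ring
  funext i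
  have h1 := key (Pi.single i 1)
  rw [kakLin_single, kakLin_single] at h1
  simpa [mul_comm] using h1

lemma kakLin_prod_surj {a b : Fin n → F} (ha : a ≠ 0) (hb : b ≠ 0)
    (hab : ∀ c : F, b ≠ c • a) :
    Function.Surjective ((kakLin a).prod (kakLin b)) := by
  have h1 : ¬ LinearMap.ker (kakLin a) ≤ LinearMap.ker (kakLin b) := by
    intro h
    obtain ⟨c, hc⟩ := kakLin_smul_of_ker_le ha h
    exact hab c hc
  have h2 : ¬ LinearMap.ker (kakLin b) ≤ LinearMap.ker (kakLin a) := by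
    intro h
    obtain ⟨c, hc⟩ := kakLin_smul_of_ker_le hb h
    have hc0 : c ≠ 0 := by rintro rfl; rw [zero_smul] at hc; exact ha hc
    exact hab c⁻¹ (by rw [hc, smul_smul, inv_mul_cancel₀ hc0, one_smul])
  obtain ⟨x₁, hx₁a, hx₁b⟩ := SetLike.not_le_iff_exists.mp h1
  obtain ⟨x₂, hx₂b, hx₂a⟩ := SetLike.not_le_iff_exists.mp h2
  have ea : kakLin a x₁ = 0 := hx₁a
  have eb : kakLin b x₂ = 0 := hx₂b
  have na : kakLin a x₂ ≠ 0 := fun h => hx₂a (LinearMap.mem_ker.mpr h)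
  have nb : kakLin b x₁ ≠ 0 := fun h => hx₁b (LinearMap.mem_ker.mpr h)
  rintro ⟨u, v⟩
  refine ⟨(u / kakLin a x₂) • x₂ + (v / kakLin b x₁) • x₁, ?_⟩
  simp only [LinearMap.prod_apply, Function.prod, map_add, map_smul, ea, eb,
    Prod.smul_mk, smul_eq_mul, mul_zero, Prod.mk_add_mk, add_zero, zero_add, Prod.mk.injEq]
  constructor <;> field_simp

lemma finrank_ker_kakLin_prod {a b : Fin n → F} (ha : a ≠ 0) (hb : b ≠ 0)
    (hab : ∀ c : F, b ≠ c • a) :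
    finrank F (LinearMap.ker ((kakLin a).prod (kakLin b))) = n - 2 := by
  have h := LinearMap.finrank_range_add_finrank_ker ((kakLin a).prod (kakLin b))
  rw [LinearMap.range_eq_top.2 (kakLin_prod_surj ha hb hab), finrank_top,
    Module.finrank_prod, finrank_self, Module.finrank_pi] at h
  simp only [Fintype.card_fin] at h
  omega

variable [Fintype F]

lemma ncard_coset (w : Submodule F (Fin n → F)) (v : Fin n → F) :
    ((v + ·) '' (w : Set (Fin n → F))).ncard = Fintype.card F ^ finrank F w := by
  classical
  rw [Set.ncard_image_of_injective _ (add_right_injective v), ← Nat.card_coe_set_eq]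
  haveI : Fintype w := Fintype.ofFinite _
  rw [Nat.card_eq_fintype_card]
  exact card_eq_pow_finrank

lemma ncard_fiber_le {W : Type*} [AddCommGroup W] [Module F W]
    (φ : (Fin n → F) →ₗ[F] W) (y : W) :
    {x | φ x = y}.ncard ≤ Fintype.card F ^ finrank F (LinearMap.ker φ) := by
  by_cases hne : {x : Fin n → F | φ x = y}.Nonempty
  · obtain ⟨x₀, hx₀⟩ := hne
    simp only [Set.mem_setOf_eq] at hx₀
    have hset : {x : Fin n → F | φ x = y} =
        (x₀ + ·) '' (LinearMap.ker φ : Set (Fin n → F)) := by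
      ext x
      simp only [Set.mem_setOf_eq, Set.mem_image, SetLike.mem_coe, LinearMap.mem_ker]
      constructor
      · intro hx
        exact ⟨x - x₀, by simp [map_sub, hx, hx₀], by abel⟩
      · rintro ⟨k, hk, rfl⟩
        simp [map_add, hk, hx₀]
    rw [hset, ncard_coset]
  · rw [Set.not_nonempty_iff_eq_empty.mp hne]
    simp

lemma ncard_coset_inter_le {a b : Fin n → F} (ha : a ≠ 0) (hb : b ≠ 0)
    (hab : ∀ c : F, b ≠ c • a) (v₁ v₂ : Fin n → F) :
    (((v₁ + ·) '' (LinearMap.ker (kakLin a) : Set (Fin n → F))) ∩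
      ((v₂ + ·) '' (LinearMap.ker (kakLin b) : Set (Fin n → F)))).ncard ≤
      Fintype.card F ^ (n - 2) := by
  have hsub : (((v₁ + ·) '' (LinearMap.ker (kakLin a) : Set (Fin n → F))) ∩
      ((v₂ + ·) '' (LinearMap.ker (kakLin b) : Set (Fin n → F)))) ⊆
      {x | ((kakLin a).prod (kakLin b)) x = (kakLin a v₁, kakLin b v₂)} := by
    rintro x ⟨⟨k₁, hk₁, rfl⟩, ⟨k₂, hk₂, he⟩⟩
    have hk₁' : kakLin a k₁ = 0 := hk₁
    have hk₂' : kakLin b k₂ = 0 := hk₂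
    simp only [Set.mem_setOf_eq, LinearMap.prod_apply, Function.prod, Prod.mk.injEq]
    constructor
    · simp [map_add, hk₁']
    · have he' : v₂ + k₂ = v₁ + k₁ := he
      rw [← he']; simp [map_add, hk₂']
  calc _ ≤ ({x | ((kakLin a).prod (kakLin b)) x = (kakLin a v₁, kakLin b v₂)} :
        Set (Fin n → F)).ncard := Set.ncard_le_ncard hsub (Set.toFinite _)
    _ ≤ Fintype.card F ^ finrank F (LinearMap.ker ((kakLin a).prod (kakLin b))) :=
        ncard_fiber_le _ _
    _ = Fintype.card F ^ (n - 2) := by rw [finrank_ker_kakLin_prod ha hb hab]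

end KakeyaAux

set_option maxHeartbeats 1000000 in
/-- Let `q` be a prime power, `n ≥ 1`, and let `E ⊆ 𝔽_q^n` be Kakeya with
respect to hyperplanes: for every `(n-1)`-dimensional linear subspace `w` of `𝔽_q^n` there is a
vector `v` such that the affine translate `v + w` is contained in `E`. Then
`|E| ≥ (q^(2n) - q^n) / (q^n + q^2 - 2q)`. -/
theorem kakeya_hyperplane_card_lower_bound
    (q n : ℕ) (hq : IsPrimePow q) (hn : 1 ≤ n)
    (F : Type*) [Field F] [Fintype F] (hF : Fintype.card F = q)
    (E : Set (Fin n → F))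
    (hE : ∀ w : Submodule F (Fin n → F), Module.finrank F w = n - 1 →
      ∃ v : Fin n → F, (v + ·) '' (w : Set (Fin n → F)) ⊆ E) :
    ((q : ℝ) ^ (2 * n) - q ^ n) / ((q : ℝ) ^ n + q ^ 2 - 2 * q) ≤ E.ncard := by
  classical
  subst hF
  set q := Fintype.card F with hq'
  have hq2 : 2 ≤ q := hq.two_le
  have hQ2 : (2 : ℝ) ≤ q := by exact_mod_cast hq2
  rcases Nat.lt_or_ge n 2 with hn2 | hn2
  · -- case n = 1
    have hn1 : n = 1 := by omega
    subst hn1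
    obtain ⟨v, hv⟩ := hE ⊥ (by simp)
    have hvE : v ∈ E := hv ⟨0, by simp, by simp⟩
    have hpos : 0 < E.ncard := (Set.ncard_pos (Set.toFinite E)).2 ⟨v, hvE⟩
    have h1 : (1 : ℝ) ≤ E.ncard := by exact_mod_cast hpos
    have hden : (0:ℝ) < (q:ℝ)^1 + (q:ℝ)^2 - 2*q := by nlinarith
    rw [div_le_iff₀ hden]
    have h2 := mul_le_mul_of_nonneg_right h1 hden.le
    norm_num at h2 ⊢
    nlinarith [h2]
  · -- main case : n ≥ 2
    have hn0 : n ≠ 0 := by omega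
    have h1qn : 1 ≤ q ^ n := Nat.one_le_pow _ _ (by omega)
    have hqqn : q ≤ q ^ n := Nat.le_self_pow hn0 q
    have hcard : Fintype.card (Fin n → F) = q ^ n := by
      rw [Fintype.card_fun, Fintype.card_fin]
    set A : Finset (Fin n → F) := Finset.univ.filter (· ≠ 0) with hA
    have hAmem : ∀ x : Fin n → F, x ∈ A ↔ x ≠ 0 := by
      intro x; simp [hA]
    have hAcard : A.card = q ^ n - 1 := by
      rw [hA, Finset.filter_ne', Finset.card_erase_of_mem (Finset.mem_univ 0),
        Finset.card_univ, hcard]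
    -- choose translates
    have hchoice : ∀ a : Fin n → F, a ≠ 0 →
        ∃ v, (v + ·) '' ((LinearMap.ker (kakLin a) : Submodule F (Fin n → F)) :
          Set (Fin n → F)) ⊆ E :=
      fun a ha => hE _ (finrank_ker_kakLin ha)
    choose! v hv using hchoice
    set T : (Fin n → F) → Set (Fin n → F) := fun a =>
      (v a + ·) '' ((LinearMap.ker (kakLin a) : Submodule F (Fin n → F)) :
        Set (Fin n → F)) with hT
    set Tf : (Fin n → F) → Finset (Fin n → F) := fun a => (Set.toFinite (T a)).toFinset
      with hTf
    set EF : Finset (Fin n → F) := (Set.toFinite E).toFinset with hEF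
    have hTsub : ∀ a ∈ A, Tf a ⊆ EF := by
      intro a ha
      exact Set.Finite.toFinset_subset_toFinset.mpr (hv a ((hAmem a).1 ha))
    have hTcard : ∀ a ∈ A, (Tf a).card = q ^ (n - 1) := by
      intro a ha
      rw [hTf]
      rw [← Set.ncard_eq_toFinset_card (T a), hT]
      simp only
      rw [ncard_coset, finrank_ker_kakLin ((hAmem a).1 ha)]
    set f : (Fin n → F) → ℕ := fun x => (A.filter (fun a => x ∈ Tf a)).card with hf
    -- first moment
    have S1 : ∑ x ∈ EF, f x = (q ^ n - 1) * q ^ (n - 1) := by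
      calc ∑ x ∈ EF, f x
          = ∑ x ∈ EF, ∑ a ∈ A, if x ∈ Tf a then 1 else 0 :=
            Finset.sum_congr rfl fun x _ => Finset.card_filter _ _
        _ = ∑ a ∈ A, ∑ x ∈ EF, if x ∈ Tf a then 1 else 0 := Finset.sum_comm
        _ = ∑ a ∈ A, (EF.filter (· ∈ Tf a)).card :=
            Finset.sum_congr rfl fun a _ => (Finset.card_filter _ _).symm
        _ = ∑ a ∈ A, (Tf a).card := by
            refine Finset.sum_congr rfl fun a ha => ?_
            rw [Finset.filter_mem_eq_inter, Finset.inter_eq_right.mpr (hTsub a ha)]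
        _ = (q ^ n - 1) * q ^ (n - 1) := by
            rw [Finset.sum_congr rfl hTcard, Finset.sum_const, smul_eq_mul, hAcard]
    -- second moment
    have S2 : ∑ x ∈ EF, (f x) ^ 2 ≤ ∑ a ∈ A, ∑ b ∈ A, (Tf a ∩ Tf b).card := by
      calc ∑ x ∈ EF, (f x) ^ 2
          = ∑ x ∈ EF, ∑ a ∈ A, ∑ b ∈ A, if x ∈ Tf a ∧ x ∈ Tf b then 1 else 0 := by
            refine Finset.sum_congr rfl fun x _ => ?_
            rw [sq]
            have hfx : f x = ∑ a ∈ A, if x ∈ Tf a then 1 else 0 := Finset.card_filter _ _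
            rw [hfx, Finset.sum_mul_sum]
            refine Finset.sum_congr rfl fun a _ => Finset.sum_congr rfl fun b _ => ?_
            by_cases h1 : x ∈ Tf a <;> by_cases h2 : x ∈ Tf b <;> simp [h1, h2]
        _ = ∑ a ∈ A, ∑ b ∈ A, ∑ x ∈ EF, if x ∈ Tf a ∧ x ∈ Tf b then 1 else 0 := by
            rw [Finset.sum_comm]
            exact Finset.sum_congr rfl fun a _ => Finset.sum_comm
        _ = ∑ a ∈ A, ∑ b ∈ A, (EF.filter (fun x => x ∈ Tf a ∧ x ∈ Tf b)).card :=
            Finset.sum_congr rfl fun a _ => Finset.sum_congr rfl fun b _ =>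
              (Finset.card_filter _ _).symm
        _ ≤ ∑ a ∈ A, ∑ b ∈ A, (Tf a ∩ Tf b).card := by
            refine Finset.sum_le_sum fun a _ => Finset.sum_le_sum fun b _ => ?_
            refine Finset.card_le_card ?_
            intro x hx
            rw [Finset.mem_filter] at hx
            exact Finset.mem_inter.mpr ⟨hx.2.1, hx.2.2⟩
    -- bounding the pair sums
    have S3 : ∀ a ∈ A, ∑ b ∈ A, (Tf a ∩ Tf b).card ≤
        (q - 1) * q ^ (n - 1) + (q ^ n - q) * q ^ (n - 2) := by
      intro a ha
      have ha0 : a ≠ 0 := (hAmem a).1 ha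
      set B : Finset (Fin n → F) := A.filter (fun b => ∃ c : F, b = c • a) with hB
      have hBimg : B = (Finset.univ.erase (0 : F)).image (fun c => c • a) := by
        ext b
        simp only [hB, Finset.mem_filter, hAmem, Finset.mem_image, Finset.mem_erase,
          Finset.mem_univ, and_true, hAmem b]
        constructor
        · rintro ⟨hb0, c, rfl⟩
          exact ⟨c, fun hc => hb0 (by rw [hc, zero_smul]), rfl⟩
        · rintro ⟨c, hc, rfl⟩
          exact ⟨smul_ne_zero hc ha0, c, rfl⟩
      have hBcard : B.card = q - 1 := by
        rw [hBimg, Finset.card_image_of_injOn, Finset.card_erase_of_mem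
          (Finset.mem_univ 0), Finset.card_univ]
        intro c _ c' _ h
        have h' : c • a = c' • a := h
        have h2 : (c - c') • a = 0 := by rw [sub_smul, h', sub_self]
        rcases smul_eq_zero.mp h2 with h3 | h3
        · exact sub_eq_zero.mp h3
        · exact absurd h3 ha0
      have hBsub : B ⊆ A := Finset.filter_subset _ _
      rw [← Finset.sum_filter_add_sum_filter_not A (fun b => ∃ c : F, b = c • a)]
      have hb1 : ∑ b ∈ B, (Tf a ∩ Tf b).card ≤ (q - 1) * q ^ (n - 1) := by
        calc ∑ b ∈ B, (Tf a ∩ Tf b).card ≤ B.card * q ^ (n - 1) := by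
              rw [← smul_eq_mul]
              refine Finset.sum_le_card_nsmul _ _ _ fun b hb => ?_
              calc (Tf a ∩ Tf b).card ≤ (Tf a).card :=
                    Finset.card_le_card Finset.inter_subset_left
                _ = q ^ (n - 1) := hTcard a ha
          _ = (q - 1) * q ^ (n - 1) := by rw [hBcard]
      have hb2 : ∑ b ∈ A.filter (fun b => ¬ ∃ c : F, b = c • a), (Tf a ∩ Tf b).card ≤
          (q ^ n - q) * q ^ (n - 2) := by
        have hcard2 : (A.filter (fun b => ¬ ∃ c : F, b = c • a)).card = q ^ n - q := by
          have h5 := Finset.card_filter_add_card_filter_not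
            (s := A) (p := fun b => ∃ c : F, b = c • a)
          rw [← hB, hAcard, hBcard] at h5
          omega
        rw [← hcard2, ← smul_eq_mul]
        refine Finset.sum_le_card_nsmul _ _ _ fun b hb => ?_
        rw [Finset.mem_filter] at hb
        obtain ⟨hbA, hbnp⟩ := hb
        have hb0 : b ≠ 0 := (hAmem b).1 hbA
        have hbnp' : ∀ c : F, b ≠ c • a := by
          intro c hc; exact hbnp ⟨c, hc⟩
        calc (Tf a ∩ Tf b).card = (T a ∩ T b).ncard := by
              rw [Set.ncard_eq_toFinset_card (T a ∩ T b)
                ((Set.toFinite (T a)).inter_of_left _),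
                Set.Finite.toFinset_inter]
          _ ≤ q ^ (n - 2) := ncard_coset_inter_le ha0 hb0 hbnp' (v a) (v b)
      exact Nat.add_le_add hb1 hb2
    have S2' : ∑ x ∈ EF, (f x) ^ 2 ≤
        (q ^ n - 1) * ((q - 1) * q ^ (n - 1) + (q ^ n - q) * q ^ (n - 2)) := by
      refine le_trans S2 ?_
      calc ∑ a ∈ A, ∑ b ∈ A, (Tf a ∩ Tf b).card
          ≤ A.card • ((q - 1) * q ^ (n - 1) + (q ^ n - q) * q ^ (n - 2)) :=
            Finset.sum_le_card_nsmul _ _ _ S3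
        _ = (q ^ n - 1) * ((q - 1) * q ^ (n - 1) + (q ^ n - q) * q ^ (n - 2)) := by
            rw [smul_eq_mul, hAcard]
    -- Cauchy–Schwarz
    have hcs : ((∑ x ∈ EF, f x : ℕ) : ℝ) ^ 2 ≤
        (EF.card : ℝ) * ((∑ x ∈ EF, (f x) ^ 2 : ℕ) : ℝ) := by
      push_cast
      exact sq_sum_le_card_mul_sum_sq
    have hEcard : (E.ncard : ℝ) = (EF.card : ℝ) := by
      have h6 : E.ncard = EF.card := by
        rw [hEF]; exact Set.ncard_eq_toFinset_card E (Set.toFinite E)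
      exact_mod_cast h6
    have l1 : ((∑ x ∈ EF, f x : ℕ) : ℝ) = ((q : ℝ) ^ n - 1) * (q : ℝ) ^ (n - 1) := by
      rw [S1]; push_cast [Nat.cast_sub h1qn]; ring
    have l2 : ((∑ x ∈ EF, (f x) ^ 2 : ℕ) : ℝ) ≤
        ((q : ℝ) ^ n - 1) * (((q : ℝ) - 1) * (q : ℝ) ^ (n - 1) +
          ((q : ℝ) ^ n - (q : ℝ)) * (q : ℝ) ^ (n - 2)) := by
      calc ((∑ x ∈ EF, (f x) ^ 2 : ℕ) : ℝ)
          ≤ (((q ^ n - 1) * ((q - 1) * q ^ (n - 1) + (q ^ n - q) * q ^ (n - 2)) : ℕ) : ℝ) := by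
            exact_mod_cast S2'
        _ = _ := by
            push_cast [Nat.cast_sub h1qn, Nat.cast_sub hqqn,
              Nat.cast_sub (by omega : 1 ≤ q)]
            ring
    have key : (((q : ℝ) ^ n - 1) * (q : ℝ) ^ (n - 1)) ^ 2 ≤
        (E.ncard : ℝ) * (((q : ℝ) ^ n - 1) * (((q : ℝ) - 1) * (q : ℝ) ^ (n - 1) +
          ((q : ℝ) ^ n - (q : ℝ)) * (q : ℝ) ^ (n - 2))) := by
      rw [← l1, hEcard]
      exact le_trans hcs (mul_le_mul_of_nonneg_left l2 (by positivity))
    -- final algebra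
    have he0 : (0 : ℝ) ≤ (E.ncard : ℝ) := by positivity
    have hK1 : (1 : ℝ) ≤ (q : ℝ) ^ (n - 2) := one_le_pow₀ (by linarith)
    have e1 : (q : ℝ) ^ (n - 1) = (q : ℝ) ^ (n - 2) * (q : ℝ) := by
      rw [← pow_succ]; congr 1; omega
    have e2 : (q : ℝ) ^ n = (q : ℝ) ^ (n - 2) * (q : ℝ) ^ 2 := by
      rw [← pow_add]; congr 1; omega
    have e3 : (q : ℝ) ^ (2 * n) = ((q : ℝ) ^ n) ^ 2 := by
      rw [← pow_mul, mul_comm]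
    set Q : ℝ := (q : ℝ) with hQdef
    set K : ℝ := Q ^ (n - 2) with hK
    set e : ℝ := (E.ncard : ℝ) with he
    rw [e3, e2]
    rw [e1, e2] at key
    have hQ4 : (4 : ℝ) ≤ Q ^ 2 := by nlinarith
    have hM : (1 : ℝ) ≤ K * Q ^ 2 - 1 := by nlinarith
    have hd : (0 : ℝ) < K * Q ^ 2 + Q ^ 2 - 2 * Q := by nlinarith
    rw [div_le_iff₀ hd]
    have hMKQ : (0 : ℝ) < (K * Q ^ 2 - 1) * K * Q :=
      mul_pos (mul_pos (by linarith) (by linarith)) (by linarith)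
    have h4 : (K * Q ^ 2 - 1) * K * Q ≤ e * (K * Q + Q - 2) := by
      refine le_of_mul_le_mul_right ?_ hMKQ
      calc (K * Q ^ 2 - 1) * K * Q * ((K * Q ^ 2 - 1) * K * Q)
          = ((K * Q ^ 2 - 1) * (K * Q)) ^ 2 := by ring
        _ ≤ e * ((K * Q ^ 2 - 1) * ((Q - 1) * (K * Q) + (K * Q ^ 2 - Q) * K)) := key
        _ = e * (K * Q + Q - 2) * ((K * Q ^ 2 - 1) * K * Q) := by ring
    calc (K * Q ^ 2) ^ 2 - K * Q ^ 2 = (K * Q ^ 2 - 1) * K * Q * Q := by ring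
      _ ≤ e * (K * Q + Q - 2) * Q := mul_le_mul_of_nonneg_right h4 (by linarith)
      _ = e * (K * Q ^ 2 + Q ^ 2 - 2 * Q) := by ring
end

section
/- Let q be a prime power, n ≥ 2, and let E be a subset of 𝔽_q^n that is Kakeya with respect to hyperplanes. Then |E| ≥ q^n − q^2. -/
open Finset Matrix

section Aux

variable {n : ℕ} {F : Type*} [Field F]

/-- The linear functional `x ↦ a ⬝ᵥ x`. -/
private def dotLin (a : Fin n → F) : (Fin n → F) →ₗ[F] F where
  toFun x := a ⬝ᵥ x
  map_add' x y := by simp [dotProduct_add]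
  map_smul' c x := by simp [dotProduct_smul]

private lemma dotLin_apply (a x : Fin n → F) : dotLin a x = a ⬝ᵥ x := rfl

private lemma dotLin_surj (a : Fin n → F) (ha : a ≠ 0) :
    Function.Surjective (dotLin a) := by
  classical
  intro c
  obtain ⟨j, hj⟩ := Function.ne_iff.mp ha
  refine ⟨Pi.single j ((a j)⁻¹ * c), ?_⟩
  simp only [dotLin_apply, dotProduct_single]
  rw [← mul_assoc, mul_inv_cancel₀ (by simpa using hj), one_mul]

private lemma dotLin_finrank_ker (a : Fin n → F) (ha : a ≠ 0) :
    Module.finrank F (LinearMap.ker (dotLin a)) = n - 1 := by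
  have h1 := (dotLin (F := F) a).finrank_range_add_finrank_ker
  rw [LinearMap.range_eq_top.mpr (dotLin_surj a ha), finrank_top, Module.finrank_self] at h1
  have h2 : Module.finrank F (Fin n → F) = n := by
    simp [Module.finrank_pi]
  rw [h2] at h1
  omega

private lemma card_zeroset [Fintype F] (a : Fin n → F) (ha : a ≠ 0) :
    Nat.card {x : Fin n → F // a ⬝ᵥ x = 0} = Fintype.card F ^ (n - 1) := by
  classical
  have h2 : Nat.card {x : Fin n → F // a ⬝ᵥ x = 0}
      = Nat.card (LinearMap.ker (dotLin a)) :=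
    Nat.card_congr (Equiv.subtypeEquivRight fun x => by
      simp [LinearMap.mem_ker, dotLin_apply]).symm
  rw [h2, Nat.card_eq_fintype_card, Module.card_eq_pow_finrank (K := F), dotLin_finrank_ker a ha]

end Aux

/-- Let `q` be a prime power, `n ≥ 2`, and let `E ⊆ 𝔽_q^n` be Kakeya with
respect to hyperplanes. Then `|E| ≥ q^n - q^2`. -/
theorem kakeya_hyperplane_card_ge_q_pow_n_sub_q_sq
    (q n : ℕ) (hq : IsPrimePow q) (hn : 2 ≤ n)
    (F : Type*) [Field F] [Fintype F] (hF : Fintype.card F = q)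
    (E : Set (Fin n → F))
    (hE : ∀ w : Submodule F (Fin n → F), Module.finrank F w = n - 1 →
      ∃ v : Fin n → F, (v + ·) '' (w : Set (Fin n → F)) ⊆ E) :
    (q : ℝ) ^ n - q ^ 2 ≤ E.ncard := by
  classical
  have hq2 : 2 ≤ q := hq.two_le
  have cardV : Fintype.card (Fin n → F) = q ^ n := by
    simp [hF]
  set C : Finset (Fin n → F) := Finset.univ.filter (· ∉ E) with hC
  -- Reduce to the bound `C.card ≤ q ^ 2` on the complement.
  suffices h : C.card ≤ q ^ 2 by
    have hsub : (Finset.univ \ C).card ≤ E.ncard := by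
      rw [Set.ncard_eq_toFinset_card' E]
      apply Finset.card_le_card
      intro x hx
      simp only [hC, Finset.mem_sdiff, Finset.mem_univ, Finset.mem_filter, true_and,
        not_not, Set.mem_toFinset] at hx ⊢
      exact hx
    have hcards : (Finset.univ \ C).card = q ^ n - C.card := by
      rw [Finset.card_sdiff_of_subset (Finset.subset_univ _), Finset.card_univ, cardV]
    have hq2n : q ^ 2 ≤ q ^ n := Nat.pow_le_pow_right (by omega) hn
    have hle : q ^ n - q ^ 2 ≤ (Finset.univ \ C).card := by
      rw [hcards]; exact Nat.sub_le_sub_left h _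
    calc (q : ℝ) ^ n - q ^ 2 = ((q ^ n - q ^ 2 : ℕ) : ℝ) := by
          rw [Nat.cast_sub hq2n]; push_cast; ring
      _ ≤ (((Finset.univ \ C).card : ℕ) : ℝ) := by exact_mod_cast Nat.cast_le.mpr hle
      _ ≤ E.ncard := by exact_mod_cast hsub
  -- For each direction `a ≠ 0` there is a value `b` avoided by `a ⬝ᵥ ·` on `C`.
  have key : ∀ a : Fin n → F, a ≠ 0 → ∃ b : F, ∀ x ∈ C, a ⬝ᵥ x ≠ b := by
    intro a ha
    obtain ⟨v, hv⟩ := hE (LinearMap.ker (dotLin a)) (dotLin_finrank_ker a ha)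
    refine ⟨a ⬝ᵥ v, fun x hx hxb => ?_⟩
    have hxE : x ∈ E := by
      apply hv
      refine ⟨x - v, ?_, show v + (x - v) = x by rw [add_comm, sub_add_cancel]⟩
      simp only [SetLike.mem_coe, LinearMap.mem_ker, dotLin_apply, dotProduct_sub, hxb, sub_self]
    rw [hC, Finset.mem_filter] at hx
    exact hx.2 hxE
  choose b hb using key
  set A : Finset (Fin n → F) := Finset.univ.erase 0 with hA
  have cardA : A.card = q ^ n - 1 := by
    rw [hA, Finset.card_erase_of_mem (Finset.mem_univ _), Finset.card_univ, cardV]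
  set fib : (Fin n → F) → F → ℕ := fun a c => (C.filter fun x => a ⬝ᵥ x = c).card with hfib
  set m : ℕ := C.card with hm
  set Q : ℕ := q ^ (n - 1) with hQ
  -- Per-direction Cauchy–Schwarz lower bound.
  have peradir : ∀ a ∈ A, (m : ℝ) ^ 2 ≤ ((q : ℝ) - 1) * ∑ c : F, (fib a c : ℝ) ^ 2 := by
    intro a haA
    have ha : a ≠ 0 := (Finset.mem_erase.mp haA).1
    set s : Finset F := Finset.univ.erase (b a ha) with hs
    have hzero : fib a (b a ha) = 0 := by
      rw [hfib]
      simp only [Finset.card_eq_zero, Finset.filter_eq_empty_iff]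
      exact fun x hx => hb a ha x hx
    have hsum : ∑ c ∈ s, fib a c = m := by
      rw [hs, Finset.sum_erase _ hzero, hm]
      exact (Finset.card_eq_sum_card_fiberwise fun x _ => Finset.mem_univ (a ⬝ᵥ x)).symm
    have hcs : ((∑ c ∈ s, (fib a c : ℝ))) ^ 2 ≤ (s.card : ℝ) * ∑ c ∈ s, (fib a c : ℝ) ^ 2 :=
      sq_sum_le_card_mul_sum_sq
    have hscard : (s.card : ℝ) = (q : ℝ) - 1 := by
      rw [hs, Finset.card_erase_of_mem (Finset.mem_univ _), Finset.card_univ, hF]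
      have : (1 : ℕ) ≤ q := by omega
      push_cast [Nat.cast_sub this]
      ring
    have hmono : ∑ c ∈ s, (fib a c : ℝ) ^ 2 ≤ ∑ c : F, (fib a c : ℝ) ^ 2 :=
      Finset.sum_le_sum_of_subset_of_nonneg (Finset.subset_univ _)
        (fun c _ _ => by positivity)
    calc (m : ℝ) ^ 2 = ((∑ c ∈ s, (fib a c : ℝ))) ^ 2 := by
          rw [← Nat.cast_sum, hsum]
      _ ≤ (s.card : ℝ) * ∑ c ∈ s, (fib a c : ℝ) ^ 2 := hcs
      _ ≤ ((q : ℝ) - 1) * ∑ c : F, (fib a c : ℝ) ^ 2 := by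
          rw [hscard]
          apply mul_le_mul_of_nonneg_left hmono
          have : (2 : ℝ) ≤ (q : ℝ) := by exact_mod_cast hq2
          linarith
  -- Rewrite the sum of squared fiber sizes as a pair count.
  have fibsq : ∀ a : Fin n → F, ∑ c : F, fib a c ^ 2 = ∑ x ∈ C, fib a (a ⬝ᵥ x) := by
    intro a
    have h1 : ∀ c : F, fib a c ^ 2 = ∑ x ∈ C.filter (fun x => a ⬝ᵥ x = c), fib a c := by
      intro c
      simp only [Finset.sum_const, smul_eq_mul, hfib, sq]
    calc ∑ c : F, fib a c ^ 2
        = ∑ c : F, ∑ x ∈ C.filter (fun x => a ⬝ᵥ x = c), fib a c := by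
          exact Finset.sum_congr rfl fun c _ => h1 c
      _ = ∑ x ∈ C, fib a (a ⬝ᵥ x) :=
          Finset.sum_fiberwise_of_maps_to' (fun x _ => Finset.mem_univ _) _
  have fibcount : ∀ (a : Fin n → F) (x : Fin n → F),
      fib a (a ⬝ᵥ x) = ∑ y ∈ C, if a ⬝ᵥ y = a ⬝ᵥ x then 1 else 0 := by
    intro a x
    rw [hfib]
    exact Finset.card_filter _ _
  -- The total pair count, summed over all nonzero directions.
  have Ncount : ∀ x ∈ C, ∀ y ∈ C,
      (∑ a ∈ A, if a ⬝ᵥ y = a ⬝ᵥ x then 1 else 0 : ℕ)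
        ≤ (Q - 1) + (if x = y then q ^ n - Q else 0) := by
    intro x hx y hy
    by_cases hxy : x = y
    · subst hxy
      have h1 : (∑ a ∈ A, if a ⬝ᵥ x = a ⬝ᵥ x then 1 else 0 : ℕ) = A.card := by
        simp
      rw [h1, if_pos rfl, cardA]
      have hQn : Q ≤ q ^ n := Nat.pow_le_pow_right (by omega) (by omega)
      have hQ1 : 1 ≤ Q := Nat.one_le_pow _ _ (by omega)
      omega
    · simp only [if_neg hxy, add_zero]
      have hd : y - x ≠ 0 := sub_ne_zero_of_ne (fun h => hxy h.symm)
      have hcz : (Finset.univ.filter fun a : Fin n → F => (y - x) ⬝ᵥ a = 0).card = Q := by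
        have h1 : (Finset.univ.filter fun a : Fin n → F => (y - x) ⬝ᵥ a = 0).card
            = Fintype.card {a : Fin n → F // (y - x) ⬝ᵥ a = 0} := (Fintype.card_subtype _).symm
        rw [h1, ← Nat.card_eq_fintype_card, card_zeroset (y - x) hd, hF, hQ]
      have hrw : (∑ a ∈ A, if a ⬝ᵥ y = a ⬝ᵥ x then 1 else 0 : ℕ)
          = (A.filter fun a => (y - x) ⬝ᵥ a = 0).card := by
        rw [Finset.card_filter]
        refine Finset.sum_congr rfl fun a _ => ?_
        have hiff : (a ⬝ᵥ y = a ⬝ᵥ x) ↔ ((y - x) ⬝ᵥ a = 0) := by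
          rw [dotProduct_comm (y - x) a, dotProduct_sub, sub_eq_zero]
        simp only [hiff]
      rw [hrw]
      have hsub : (A.filter fun a => (y - x) ⬝ᵥ a = 0)
          ⊆ (Finset.univ.filter fun a => (y - x) ⬝ᵥ a = 0).erase 0 := by
        intro a haf
        rw [Finset.mem_filter] at haf
        rw [Finset.mem_erase]
        refine ⟨(Finset.mem_erase.mp haf.1).1, Finset.mem_filter.mpr ⟨Finset.mem_univ _, haf.2⟩⟩
      calc (A.filter fun a => (y - x) ⬝ᵥ a = 0).card
          ≤ ((Finset.univ.filter fun a => (y - x) ⬝ᵥ a = 0).erase 0).card :=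
            Finset.card_le_card hsub
        _ = Q - 1 := by
            rw [Finset.card_erase_of_mem, hcz]
            exact Finset.mem_filter.mpr ⟨Finset.mem_univ _, by simp⟩
  -- Total pair count over all directions.
  have h1 : ∑ a ∈ A, ∑ c : F, fib a c ^ 2
      = ∑ x ∈ C, ∑ y ∈ C, ∑ a ∈ A, (if a ⬝ᵥ y = a ⬝ᵥ x then 1 else 0 : ℕ) := by
    calc ∑ a ∈ A, ∑ c : F, fib a c ^ 2
        = ∑ a ∈ A, ∑ x ∈ C, ∑ y ∈ C, (if a ⬝ᵥ y = a ⬝ᵥ x then 1 else 0 : ℕ) := by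
          refine Finset.sum_congr rfl fun a _ => ?_
          rw [fibsq a]
          exact Finset.sum_congr rfl fun x _ => fibcount a x
      _ = ∑ x ∈ C, ∑ a ∈ A, ∑ y ∈ C, (if a ⬝ᵥ y = a ⬝ᵥ x then 1 else 0 : ℕ) :=
          Finset.sum_comm
      _ = ∑ x ∈ C, ∑ y ∈ C, ∑ a ∈ A, (if a ⬝ᵥ y = a ⬝ᵥ x then 1 else 0 : ℕ) :=
          Finset.sum_congr rfl fun x _ => Finset.sum_comm
  have total : ∑ a ∈ A, ∑ c : F, fib a c ^ 2
      ≤ m * m * (Q - 1) + m * (q ^ n - Q) := by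
    rw [h1]
    calc ∑ x ∈ C, ∑ y ∈ C, ∑ a ∈ A, (if a ⬝ᵥ y = a ⬝ᵥ x then 1 else 0 : ℕ)
        ≤ ∑ x ∈ C, ∑ y ∈ C, ((Q - 1) + if x = y then q ^ n - Q else 0) := by
          refine Finset.sum_le_sum fun x hx => Finset.sum_le_sum fun y hy => ?_
          exact Ncount x hx y hy
      _ = m * m * (Q - 1) + m * (q ^ n - Q) := by
          have hrow : ∀ x ∈ C, ∑ y ∈ C, ((Q - 1) + if x = y then q ^ n - Q else 0)
              = m * (Q - 1) + (q ^ n - Q) := by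
            intro x hx
            rw [Finset.sum_add_distrib, Finset.sum_const, Finset.sum_ite_eq C x fun _ => q ^ n - Q,
              if_pos hx, ← hm, smul_eq_mul]
          rw [Finset.sum_congr rfl hrow, Finset.sum_const, ← hm, smul_eq_mul, mul_add, ← mul_assoc]
  -- Sum the per-direction bounds and compare.
  have hQ1 : 1 ≤ Q := Nat.one_le_pow _ _ (by omega)
  have hQn : Q ≤ q ^ n := Nat.pow_le_pow_right (by omega) (by omega)
  have hqQ : q * Q = q ^ n := by
    rw [hQ, ← pow_succ']
    congr 1
    omega
  have hqr2 : (2 : ℝ) ≤ (q : ℝ) := by exact_mod_cast hq2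
  have hQrq : (q : ℝ) ≤ (Q : ℝ) := by
    have : q ≤ Q := by
      rw [hQ]
      calc q = q ^ 1 := (pow_one q).symm
        _ ≤ q ^ (n - 1) := Nat.pow_le_pow_right (by omega) (by omega)
    exact_mod_cast this
  have hmain : ((q : ℝ) * Q - 1) * (m : ℝ) ^ 2
      ≤ ((q : ℝ) - 1) * ((m : ℝ) * m * ((Q : ℝ) - 1) + (m : ℝ) * ((q : ℝ) * Q - Q)) := by
    have hsumLHS : ((A.card : ℝ)) * (m : ℝ) ^ 2
        ≤ ((q : ℝ) - 1) * ∑ a ∈ A, ∑ c : F, (fib a c : ℝ) ^ 2 := by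
      calc ((A.card : ℝ)) * (m : ℝ) ^ 2 = ∑ _a ∈ A, (m : ℝ) ^ 2 := by
            rw [Finset.sum_const, nsmul_eq_mul]
        _ ≤ ∑ a ∈ A, ((q : ℝ) - 1) * ∑ c : F, (fib a c : ℝ) ^ 2 :=
            Finset.sum_le_sum peradir
        _ = ((q : ℝ) - 1) * ∑ a ∈ A, ∑ c : F, (fib a c : ℝ) ^ 2 := by
            rw [Finset.mul_sum]
    have hcastsum : ∑ a ∈ A, ∑ c : F, (fib a c : ℝ) ^ 2
        = ((∑ a ∈ A, ∑ c : F, fib a c ^ 2 : ℕ) : ℝ) := by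
      push_cast
      rfl
    have hcardA : ((A.card : ℝ)) = (q : ℝ) * Q - 1 := by
      rw [cardA, ← hqQ]
      have : 1 ≤ q * Q := Nat.one_le_iff_ne_zero.mpr (by positivity)
      push_cast [Nat.cast_sub this]
      ring
    have htotR : ((∑ a ∈ A, ∑ c : F, fib a c ^ 2 : ℕ) : ℝ)
        ≤ (m : ℝ) * m * ((Q : ℝ) - 1) + (m : ℝ) * ((q : ℝ) * Q - Q) := by
      calc ((∑ a ∈ A, ∑ c : F, fib a c ^ 2 : ℕ) : ℝ)
          ≤ ((m * m * (Q - 1) + m * (q ^ n - Q) : ℕ) : ℝ) := by exact_mod_cast total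
        _ = (m : ℝ) * m * ((Q : ℝ) - 1) + (m : ℝ) * ((q : ℝ) * Q - Q) := by
            rw [← hqQ]
            have h1 : (1 : ℕ) ≤ Q := hQ1
            have h2 : Q ≤ q * Q := Nat.le_mul_of_pos_left Q (by omega)
            push_cast [Nat.cast_sub h1, Nat.cast_sub h2]
            ring
    calc ((q : ℝ) * Q - 1) * (m : ℝ) ^ 2 = ((A.card : ℝ)) * (m : ℝ) ^ 2 := by rw [hcardA]
      _ ≤ ((q : ℝ) - 1) * ∑ a ∈ A, ∑ c : F, (fib a c : ℝ) ^ 2 := hsumLHS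
      _ = ((q : ℝ) - 1) * ((∑ a ∈ A, ∑ c : F, fib a c ^ 2 : ℕ) : ℝ) := by rw [hcastsum]
      _ ≤ ((q : ℝ) - 1) * ((m : ℝ) * m * ((Q : ℝ) - 1) + (m : ℝ) * ((q : ℝ) * Q - Q)) := by
          apply mul_le_mul_of_nonneg_left htotR
          linarith
  -- Final algebra: deduce `m ≤ q ^ 2`.
  have hmr : (m : ℝ) ≤ (q : ℝ) ^ 2 := by
    by_contra hcon
    push_neg at hcon
    have hm0 : (0 : ℝ) ≤ (m : ℝ) := Nat.cast_nonneg m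
    have hQ0 : (0 : ℝ) ≤ (Q : ℝ) := Nat.cast_nonneg Q
    have hq20 : (0 : ℝ) ≤ (q : ℝ) - 2 := by linarith
    have hpos : (0 : ℝ) < (q : ℝ) + (Q : ℝ) - 2 := by linarith
    have hmpos : (0 : ℝ) < (m : ℝ) := lt_of_le_of_lt (by positivity) hcon
    have e1 : ((q : ℝ) + (Q : ℝ) - 2) * (m : ℝ) ^ 2
        ≤ ((q : ℝ) - 1) ^ 2 * ((Q : ℝ) * (m : ℝ)) := by linear_combination hmain
    have e2 : ((q : ℝ) - 1) ^ 2 * (Q : ℝ) ≤ (q : ℝ) ^ 2 * ((q : ℝ) + (Q : ℝ) - 2) := by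
      nlinarith [mul_nonneg (mul_self_nonneg (q : ℝ)) hq20,
        mul_nonneg hQ0 (by linarith : (0 : ℝ) ≤ 2 * (q : ℝ) - 1)]
    have e3 : ((q : ℝ) - 1) ^ 2 * ((Q : ℝ) * (m : ℝ))
        ≤ ((q : ℝ) ^ 2 * ((q : ℝ) + (Q : ℝ) - 2)) * (m : ℝ) := by
      calc ((q : ℝ) - 1) ^ 2 * ((Q : ℝ) * (m : ℝ)) = (((q : ℝ) - 1) ^ 2 * (Q : ℝ)) * (m : ℝ) := by
            ring
        _ ≤ ((q : ℝ) ^ 2 * ((q : ℝ) + (Q : ℝ) - 2)) * (m : ℝ) :=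
            mul_le_mul_of_nonneg_right e2 hm0
    have e4 : ((q : ℝ) ^ 2 * ((q : ℝ) + (Q : ℝ) - 2)) * (m : ℝ)
        < ((q : ℝ) + (Q : ℝ) - 2) * (m : ℝ) ^ 2 := by
      nlinarith [mul_pos (mul_pos hpos hmpos) (sub_pos.mpr hcon)]
    linarith
  exact_mod_cast hmr
end
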